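/- arXiv:1406.4552 — 6 statements merged into one kernel-verified Lean document; each statement's English description precedes it below -/
import Mathlib

section
/- Let θ₀ > 0 and let Y = ℝ²/G be the quotient of ℝ² (usual topology) by the group G generated by the boost H_{θ₀}, with the quotient topology. Then Y is a T0 space but not a T1 space. -/
/-- The hyperbolic rotation (boost) with rapidity θ acting on ℝ². -/
noncomputable def boost (θ : ℝ) (p : ℝ × ℝ) : ℝ × ℝ :=
  (p.1 * Real.cosh θ + p.2 * Real.sinh θ, p.1 * Real.sinh θ + p.2 * Real.cosh θ)

/-- Two points of ℝ² are related iff one is the image of the other under some iterate of the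
boost H_{θ₀}. -/
def boostRel (θ₀ : ℝ) (p q : ℝ × ℝ) : Prop := ∃ n : ℤ, q = boost (n * θ₀) p

namespace BoostAux

open Real Filter Set

lemma boost_apply_iff (θ : ℝ) (p q : ℝ × ℝ) :
    q = boost θ p ↔
      q.1 + q.2 = exp θ * (p.1 + p.2) ∧ q.1 - q.2 = exp (-θ) * (p.1 - p.2) := by
  constructor
  · rintro rfl
    refine ⟨?_, ?_⟩
    · show p.1 * Real.cosh θ + p.2 * Real.sinh θ + (p.1 * Real.sinh θ + p.2 * Real.cosh θ) = _
      linear_combination (p.1 + p.2) * Real.cosh_add_sinh θ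
    · show p.1 * Real.cosh θ + p.2 * Real.sinh θ - (p.1 * Real.sinh θ + p.2 * Real.cosh θ) = _
      linear_combination (p.1 - p.2) * Real.cosh_sub_sinh θ
  · rintro ⟨h1, h2⟩
    have hc : Real.cosh θ = (exp θ + exp (-θ)) / 2 := Real.cosh_eq θ
    have hs : Real.sinh θ = (exp θ - exp (-θ)) / 2 := Real.sinh_eq θ
    have e1 : q.1 = p.1 * Real.cosh θ + p.2 * Real.sinh θ := by
      linear_combination h1 / 2 + h2 / 2 - p.1 * hc - p.2 * hs
    have e2 : q.2 = p.1 * Real.sinh θ + p.2 * Real.cosh θ := by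
      linear_combination h1 / 2 - h2 / 2 - p.2 * hc - p.1 * hs
    exact Prod.ext e1 e2

lemma boostRel_iff (θ₀ : ℝ) (p q : ℝ × ℝ) :
    boostRel θ₀ p q ↔ ∃ n : ℤ,
      q.1 + q.2 = exp ((n : ℝ) * θ₀) * (p.1 + p.2) ∧
      q.1 - q.2 = exp (-((n : ℝ) * θ₀)) * (p.1 - p.2) :=
  exists_congr fun n => boost_apply_iff _ _ _

lemma exp_mul_exp_neg (x : ℝ) : exp x * exp (-x) = 1 := by
  rw [← Real.exp_add]; simp

lemma boostRel_equiv (θ₀ : ℝ) : Equivalence (boostRel θ₀) := by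
  constructor
  · intro p
    rw [boostRel_iff]
    exact ⟨0, by simp⟩

  · intro p q h
    rw [boostRel_iff] at h ⊢
    obtain ⟨n, h1, h2⟩ := h
    refine ⟨-n, ?_, ?_⟩
    · rw [h1]; push_cast; rw [← mul_assoc, ← Real.exp_add]; ring_nf; simp
    · rw [h2]; push_cast; rw [← mul_assoc, ← Real.exp_add]; ring_nf; simp
  · intro p q r h h'
    rw [boostRel_iff] at h h' ⊢
    obtain ⟨n, h1, h2⟩ := h
    obtain ⟨m, h1', h2'⟩ := h'
    refine ⟨m + n, ?_, ?_⟩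
    · rw [h1', h1, ← mul_assoc, ← Real.exp_add]; push_cast; ring_nf
    · rw [h2', h2, ← mul_assoc, ← Real.exp_add]; push_cast; ring_nf

lemma mk_eq_mk (θ₀ : ℝ) (p q : ℝ × ℝ) :
    Quot.mk (boostRel θ₀) p = Quot.mk (boostRel θ₀) q ↔ boostRel θ₀ p q := by
  rw [Quot.eq]
  exact (boostRel_equiv θ₀).eqvGen_iff

/-- Invariance of the product of light-cone coordinates. -/
lemma prod_inv {θ₀ : ℝ} {a b : ℝ × ℝ} (h : boostRel θ₀ a b) :
    (b.1 + b.2) * (b.1 - b.2) = (a.1 + a.2) * (a.1 - a.2) := by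
  rw [boostRel_iff] at h
  obtain ⟨n, h1, h2⟩ := h
  rw [h1, h2]
  linear_combination (a.1 + a.2) * (a.1 - a.2) * exp_mul_exp_neg ((n : ℝ) * θ₀)

lemma U_inv {θ₀ : ℝ} {a b : ℝ × ℝ} (h : boostRel θ₀ a b) :
    ∃ k : ℤ, b.1 + b.2 = exp ((k : ℝ) * θ₀) * (a.1 + a.2) := by
  rw [boostRel_iff] at h
  obtain ⟨n, h1, _⟩ := h
  exact ⟨n, h1⟩

lemma V_inv {θ₀ : ℝ} {a b : ℝ × ℝ} (h : boostRel θ₀ a b) :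
    ∃ k : ℤ, b.1 - b.2 = exp ((k : ℝ) * θ₀) * (a.1 - a.2) := by
  rw [boostRel_iff] at h
  obtain ⟨n, _, h2⟩ := h
  exact ⟨-n, by push_cast; rw [h2]; ring_nf⟩

/-- If an invariant open predicate holds at `p` but not at `q`, the classes are separable. -/
lemma not_inseparable_of_pred (θ₀ : ℝ) (P : ℝ × ℝ → Prop)
    (hinv : ∀ a b, boostRel θ₀ a b → (P a ↔ P b))
    (hopen : IsOpen {w : ℝ × ℝ | P w}) {p q : ℝ × ℝ} (hp : P p) (hq : ¬ P q) :
    ¬ Inseparable (Quot.mk (boostRel θ₀) p) (Quot.mk (boostRel θ₀) q) := by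
  intro h
  have hS : IsOpen {z : Quot (boostRel θ₀) |
      Quot.lift P (fun a b hab => propext (hinv a b hab)) z} := by
    rw [isOpen_coinduced (f := Quot.mk (boostRel θ₀))]
    exact hopen
  exact hq (((inseparable_iff_forall_isOpen.mp h) _ hS).mp hp)

/-- Separation via a positively-scaled invariant coordinate. -/
lemma separate_scaling (θ₀ : ℝ) (hθ₀ : 0 < θ₀) (f : ℝ × ℝ → ℝ) (hf : Continuous f)
    (hinv : ∀ a b, boostRel θ₀ a b → ∃ k : ℤ, f b = exp ((k : ℝ) * θ₀) * f a)
    {p q : ℝ × ℝ} (hu : f p ≠ 0)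
    (hn : ∀ n : ℤ, f q ≠ exp ((n : ℝ) * θ₀) * f p) :
    ¬ Inseparable (Quot.mk (boostRel θ₀) p) (Quot.mk (boostRel θ₀) q) := by
  rcases lt_trichotomy (f q * f p) 0 with hs | hs | hs
  · -- opposite signs: use the sign of f as separating invariant
    refine not_inseparable_of_pred θ₀ (fun w => 0 < f w * f p) ?_ ?_ ?_ ?_
    · intro a b hab
      obtain ⟨k, hk⟩ := hinv a b hab
      show 0 < f a * f p ↔ 0 < f b * f p
      rw [hk, mul_assoc]
      exact ⟨fun h => (mul_pos_iff_of_pos_left (Real.exp_pos _)).mpr h,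
        fun h => (mul_pos_iff_of_pos_left (Real.exp_pos _)).mp h⟩
    · exact isOpen_lt continuous_const (hf.mul continuous_const)
    · exact mul_self_pos.mpr hu
    · simp only [not_lt]; linarith
  · -- f q = 0 while f p ≠ 0
    have hq0 : f q = 0 := by
      rcases mul_eq_zero.mp hs with h | h
      · exact h
      · exact absurd h hu
    refine not_inseparable_of_pred θ₀ (fun w => f w ≠ 0) ?_ ?_ hu (by simp [hq0])
    · intro a b hab
      obtain ⟨k, hk⟩ := hinv a b hab
      show f a ≠ 0 ↔ f b ≠ 0
      rw [hk]
      simp [Real.exp_ne_zero]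
    · exact isOpen_ne_fun hf continuous_const
  · -- same sign: use log (f w / f p) modulo θ₀ℤ
    set t : ℝ := Real.log (f q / f p) with ht
    have hdivpos : 0 < f q / f p := by
      rcases lt_or_gt_of_ne hu with h | h
      · have : f q < 0 := by nlinarith
        exact div_pos_of_neg_of_neg this h
      · have : 0 < f q := by nlinarith
        exact div_pos this h
    have hnt : ∀ n : ℤ, t ≠ (n : ℝ) * θ₀ := by
      intro n hEq
      apply hn n
      have : f q / f p = exp ((n : ℝ) * θ₀) := by rw [← hEq, Real.exp_log hdivpos]
      field_simp at this
      linarith [this]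
    set n₀ : ℤ := ⌊t / θ₀⌋ with hn₀
    have hfl : (n₀ : ℝ) * θ₀ ≤ t := by
      rw [← le_div_iff₀ hθ₀]
      exact Int.floor_le _
    have hfl2 : t < ((n₀ : ℝ) + 1) * θ₀ := by
      rw [← div_lt_iff₀ hθ₀]
      exact Int.lt_floor_add_one _
    have hfl' : (n₀ : ℝ) * θ₀ < t := lt_of_le_of_ne hfl (Ne.symm (hnt n₀))
    set δ : ℝ := min (t - (n₀ : ℝ) * θ₀) (((n₀ : ℝ) + 1) * θ₀ - t) with hδdef
    have hδ : 0 < δ := lt_min (by linarith) (by linarith)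
    set O : Set ℝ := ⋃ n : ℤ, Ioo ((n : ℝ) * θ₀ - δ) ((n : ℝ) * θ₀ + δ) with hO
    have hOopen : IsOpen O := isOpen_iUnion fun n => isOpen_Ioo
    refine not_inseparable_of_pred θ₀
      (fun w => 0 < f w * f p ∧ Real.log (f w / f p) ∈ O) ?_ ?_ ?_ ?_
    · -- invariance
      intro a b hab
      obtain ⟨k, hk⟩ := hinv a b hab
      show (0 < f a * f p ∧ Real.log (f a / f p) ∈ O) ↔
        (0 < f b * f p ∧ Real.log (f b / f p) ∈ O)
      have hsign : (0 < f b * f p) ↔ (0 < f a * f p) := by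
        rw [hk, mul_assoc]
        exact mul_pos_iff_of_pos_left (Real.exp_pos _)
      constructor
      · rintro ⟨h1, h2⟩
        have h1' := hsign.mpr h1
        refine ⟨h1', ?_⟩
        have ha0 : f a / f p ≠ 0 := by
          intro hc
          rw [div_eq_zero_iff] at hc
          rcases hc with hc | hc
          · rw [hc] at h1; simp at h1
          · exact hu hc
        have hlog : Real.log (f b / f p) = (k : ℝ) * θ₀ + Real.log (f a / f p) := by
          rw [hk, mul_div_assoc, Real.log_mul (Real.exp_ne_zero _) ha0, Real.log_exp]
        rw [hlog]
        obtain ⟨n, hn'⟩ := mem_iUnion.mp h2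
        refine mem_iUnion.mpr ⟨n + k, ?_⟩
        simp only [mem_Ioo] at hn' ⊢
        push_cast
        constructor <;> nlinarith [hn'.1, hn'.2]
      · rintro ⟨h1, h2⟩
        have h1' := hsign.mp h1
        refine ⟨h1', ?_⟩
        have hb0 : f b / f p ≠ 0 := by
          intro hc
          rw [div_eq_zero_iff] at hc
          rcases hc with hc | hc
          · rw [hc] at h1; simp at h1
          · exact hu hc
        have ha0 : f a / f p ≠ 0 := by
          intro hc
          rw [div_eq_zero_iff] at hc
          rcases hc with hc | hc
          · rw [hc] at h1'; simp at h1'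
          · exact hu hc
        have hlog : Real.log (f b / f p) = (k : ℝ) * θ₀ + Real.log (f a / f p) := by
          rw [hk, mul_div_assoc, Real.log_mul (Real.exp_ne_zero _) ha0, Real.log_exp]
        rw [hlog] at h2
        obtain ⟨n, hn'⟩ := mem_iUnion.mp h2
        refine mem_iUnion.mpr ⟨n - k, ?_⟩
        simp only [mem_Ioo] at hn' ⊢
        push_cast
        constructor <;> nlinarith [hn'.1, hn'.2]
    · -- openness
      have hSopen : IsOpen {w : ℝ × ℝ | 0 < f w * f p} :=
        isOpen_lt continuous_const (hf.mul continuous_const)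
      have hcont : ContinuousOn (fun w => Real.log (f w / f p)) {w : ℝ × ℝ | 0 < f w * f p} := by
        apply ContinuousOn.log
        · exact (hf.div_const _).continuousOn
        · intro w hw
          simp only [mem_setOf_eq] at hw
          intro hc
          rw [div_eq_zero_iff] at hc
          rcases hc with hc | hc
          · rw [hc] at hw; simp at hw
          · exact hu hc
      exact hcont.isOpen_inter_preimage hSopen hOopen
    · -- holds at p
      refine ⟨mul_self_pos.mpr hu, ?_⟩
      rw [div_self hu, Real.log_one]
      refine mem_iUnion.mpr ⟨0, ?_⟩
      simp [hδ]
    · -- fails at q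
      rintro ⟨-, h2⟩
      obtain ⟨n, hn'⟩ := mem_iUnion.mp h2
      rw [← ht] at hn'
      simp only [mem_Ioo] at hn'
      rcases le_or_gt n n₀ with hle | hlt
      · have : (n : ℝ) * θ₀ ≤ (n₀ : ℝ) * θ₀ :=
          mul_le_mul_of_nonneg_right (by exact_mod_cast hle) hθ₀.le
        have hd : δ ≤ t - (n₀ : ℝ) * θ₀ := min_le_left _ _
        linarith [hn'.2]
      · have : ((n₀ : ℝ) + 1) * θ₀ ≤ (n : ℝ) * θ₀ := by
          have : (n₀ : ℝ) + 1 ≤ (n : ℝ) := by exact_mod_cast hlt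
          nlinarith
        have hd : δ ≤ ((n₀ : ℝ) + 1) * θ₀ - t := min_le_right _ _
        linarith [hn'.1]

end BoostAux

open BoostAux Real Filter Set in
theorem quotient_plane_T0_not_T1 (θ₀ : ℝ) (hθ₀ : 0 < θ₀) :
    T0Space (Quot (boostRel θ₀)) ∧ ¬ T1Space (Quot (boostRel θ₀)) := by
  constructor
  · -- T0
    rw [t0Space_iff_inseparable]
    intro x y
    induction x using Quot.inductionOn with | h p => ?_
    induction y using Quot.inductionOn with | h q => ?_
    intro h
    by_contra hne
    have hnr : ¬ boostRel θ₀ p q := fun hr => hne (Quot.sound hr)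
    -- case A : different products
    by_cases hprod : (p.1 + p.2) * (p.1 - p.2) = (q.1 + q.2) * (q.1 - q.2)
    · -- products equal
      by_cases hu : p.1 + p.2 = 0
      · by_cases hu' : q.1 + q.2 = 0
        · -- both on the v-axis; compare v-coordinates
          by_cases hv : p.1 - p.2 = 0
          · by_cases hv' : q.1 - q.2 = 0
            · -- both are the origin, so related
              apply hnr
              rw [boostRel_iff]
              refine ⟨0, ?_, ?_⟩ <;> simp [hu, hu', hv, hv']
            · -- p = 0, q ≠ 0 on v side
              refine separate_scaling θ₀ hθ₀ (fun w => w.1 - w.2)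
                (continuous_fst.sub continuous_snd) (fun a b hab => V_inv hab) hv' ?_ h.symm
              intro n hEq
              have hEq' : p.1 - p.2 = Real.exp ((n : ℝ) * θ₀) * (q.1 - q.2) := hEq
              rw [hv] at hEq'
              exact hv' ((mul_eq_zero.mp hEq'.symm).resolve_left (Real.exp_ne_zero _))
          · by_cases hv' : q.1 - q.2 = 0
            · refine separate_scaling θ₀ hθ₀ (fun w => w.1 - w.2)
                (continuous_fst.sub continuous_snd) (fun a b hab => V_inv hab) hv ?_ h
              intro n hEq
              have hEq' : q.1 - q.2 = Real.exp ((n : ℝ) * θ₀) * (p.1 - p.2) := hEq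
              rw [hv'] at hEq'
              exact hv ((mul_eq_zero.mp hEq'.symm).resolve_left (Real.exp_ne_zero _))
            · -- both nonzero on v-axis
              refine separate_scaling θ₀ hθ₀ (fun w => w.1 - w.2)
                (continuous_fst.sub continuous_snd) (fun a b hab => V_inv hab) hv ?_ h
              intro n hEq
              have hEq' : q.1 - q.2 = Real.exp ((n : ℝ) * θ₀) * (p.1 - p.2) := hEq
              apply hnr
              rw [boostRel_iff]
              refine ⟨-n, ?_, ?_⟩
              · push_cast; simp [hu, hu']
              · push_cast
                rw [hEq']
                congr 2
                ring
        · -- u p = 0, u q ≠ 0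
          refine separate_scaling θ₀ hθ₀ (fun w => w.1 + w.2)
            (continuous_fst.add continuous_snd) (fun a b hab => U_inv hab) hu' ?_ h.symm
          intro n hEq
          have hEq' : p.1 + p.2 = Real.exp ((n : ℝ) * θ₀) * (q.1 + q.2) := hEq
          rw [hu] at hEq'
          exact hu' ((mul_eq_zero.mp hEq'.symm).resolve_left (Real.exp_ne_zero _))
      · by_cases hu' : q.1 + q.2 = 0
        · refine separate_scaling θ₀ hθ₀ (fun w => w.1 + w.2)
            (continuous_fst.add continuous_snd) (fun a b hab => U_inv hab) hu ?_ h
          intro n hEq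
          have hEq' : q.1 + q.2 = Real.exp ((n : ℝ) * θ₀) * (p.1 + p.2) := hEq
          rw [hu'] at hEq'
          exact hu ((mul_eq_zero.mp hEq'.symm).resolve_left (Real.exp_ne_zero _))
        · -- both u nonzero
          refine separate_scaling θ₀ hθ₀ (fun w => w.1 + w.2)
            (continuous_fst.add continuous_snd) (fun a b hab => U_inv hab) hu ?_ h
          intro n hEq
          have hEq' : q.1 + q.2 = Real.exp ((n : ℝ) * θ₀) * (p.1 + p.2) := hEq
          apply hnr
          rw [boostRel_iff]
          refine ⟨n, hEq', ?_⟩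
          -- from product equality deduce the v-equation
          have hexp := exp_mul_exp_neg ((n : ℝ) * θ₀)
          have h2 : (p.1 + p.2) * (p.1 - p.2)
              = Real.exp ((n : ℝ) * θ₀) * (p.1 + p.2) * (q.1 - q.2) := by
            rw [hprod, hEq']
          have key : (p.1 + p.2) * (q.1 - q.2) =
              (p.1 + p.2) * (Real.exp (-((n : ℝ) * θ₀)) * (p.1 - p.2)) := by
            linear_combination (-(Real.exp (-((n : ℝ) * θ₀)))) * h2
              - (p.1 + p.2) * (q.1 - q.2) * hexp
          exact mul_left_cancel₀ hu key
    · -- products differ: use the invariant product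
      refine not_inseparable_of_pred θ₀
        (fun w => (w.1 + w.2) * (w.1 - w.2) ≠ (q.1 + q.2) * (q.1 - q.2)) ?_ ?_ hprod (by simp) h
      · intro a b hab
        show _ ≠ _ ↔ _ ≠ _
        rw [prod_inv hab]
      · exact isOpen_ne_fun
          (((continuous_fst.add continuous_snd).mul (continuous_fst.sub continuous_snd)))
          continuous_const
  · -- not T1
    intro hT1
    have hcl : IsClosed {Quot.mk (boostRel θ₀) ((1 : ℝ), (1 : ℝ))} := isClosed_singleton
    have hclpre : IsClosed (Quot.mk (boostRel θ₀) ⁻¹' {Quot.mk (boostRel θ₀) (1, 1)}) :=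
      hcl.preimage continuous_quot_mk
    -- the sequence (exp(-kθ₀), exp(-kθ₀)) lies in the preimage and tends to (0,0)
    have hmem : ∀ k : ℕ, ((Real.exp (-(k * θ₀)), Real.exp (-(k * θ₀))) : ℝ × ℝ) ∈
        Quot.mk (boostRel θ₀) ⁻¹' {Quot.mk (boostRel θ₀) (1, 1)} := by
      intro k
      simp only [mem_preimage, mem_singleton_iff]
      rw [mk_eq_mk, boostRel_iff]
      have hek : Real.exp ((k : ℝ) * θ₀) * Real.exp (-((k : ℝ) * θ₀)) = 1 :=
        exp_mul_exp_neg _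
      refine ⟨(k : ℤ), ?_, ?_⟩
      · push_cast
        linear_combination (-2 : ℝ) * hek
      · push_cast
        ring
    have htend : Tendsto (fun k : ℕ => ((Real.exp (-(k * θ₀)), Real.exp (-(k * θ₀))) : ℝ × ℝ))
        atTop (nhds ((0 : ℝ), (0 : ℝ))) := by
      have h1 : Tendsto (fun k : ℕ => -((k : ℝ) * θ₀)) atTop atBot := by
        apply Filter.tendsto_neg_atBot_iff.mpr
        exact Tendsto.atTop_mul_const hθ₀ tendsto_natCast_atTop_atTop
      have h2 : Tendsto (fun k : ℕ => Real.exp (-((k : ℝ) * θ₀))) atTop (nhds 0) :=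
        Real.tendsto_exp_atBot.comp h1
      exact h2.prodMk_nhds h2
    have h0 : ((0 : ℝ), (0 : ℝ)) ∈ Quot.mk (boostRel θ₀) ⁻¹' {Quot.mk (boostRel θ₀) (1, 1)} :=
      hclpre.mem_of_tendsto htend (Filter.Eventually.of_forall hmem)
    simp only [mem_preimage, mem_singleton_iff] at h0
    rw [mk_eq_mk, boostRel_iff] at h0
    obtain ⟨n, h1, -⟩ := h0
    simp at h1
end

section
/- Let θ₀ > 0 and let Y* = (ℝ²∖{0})/G be the quotient of the punctured plane by the group G generated by the boost H_{θ₀}, with the quotient topology. Then Y* is T1 but not Hausdorff (not T2). -/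
/-- The punctured plane with the subspace topology. -/
def PuncturedPlane : Type := {p : ℝ × ℝ // p ≠ 0}

instance : TopologicalSpace PuncturedPlane := instTopologicalSpaceSubtype

/-- Two nonzero points are related iff one is the image of the other under an iterate of the
boost H_{θ₀}. -/
def boostRel' (θ₀ : ℝ) (p q : PuncturedPlane) : Prop := ∃ n : ℤ, q.val = boost (n * θ₀) p.val

open Real Filter Topology

lemma boost_u (θ : ℝ) (p : ℝ × ℝ) :
    (boost θ p).1 + (boost θ p).2 = Real.exp θ * (p.1 + p.2) := by
  simp only [boost]; rw [← Real.cosh_add_sinh]; ring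

lemma boost_v (θ : ℝ) (p : ℝ × ℝ) :
    (boost θ p).1 - (boost θ p).2 = Real.exp (-θ) * (p.1 - p.2) := by
  simp only [boost]; rw [← Real.cosh_sub_sinh]; ring

lemma boost_eq_iff (θ : ℝ) (p q : ℝ × ℝ) :
    q = boost θ p ↔ q.1 + q.2 = Real.exp θ * (p.1 + p.2) ∧
      q.1 - q.2 = Real.exp (-θ) * (p.1 - p.2) := by
  constructor
  · rintro rfl; exact ⟨boost_u θ p, boost_v θ p⟩
  · rintro ⟨h1, h2⟩
    have hu := boost_u θ p
    have hv := boost_v θ p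
    have : q.1 = (boost θ p).1 := by linarith
    have : q.2 = (boost θ p).2 := by linarith
    exact Prod.ext ‹_› ‹_›

lemma exp_cancel (a u : ℝ) : Real.exp (-a) * (Real.exp a * u) = u := by
  rw [← mul_assoc, ← Real.exp_add]; simp

lemma exp_cancel' (a u : ℝ) : Real.exp a * (Real.exp (-a) * u) = u := by
  rw [← mul_assoc, ← Real.exp_add]; simp

lemma boostRel'_equiv (θ₀ : ℝ) : Equivalence (boostRel' θ₀) := by
  constructor
  · intro p; exact ⟨0, by rw [boost_eq_iff]; push_cast; simp⟩
  · rintro p q ⟨n, hn⟩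
    refine ⟨-n, ?_⟩
    rw [boost_eq_iff] at hn ⊢
    push_cast
    rw [hn.1, hn.2]
    constructor <;> simp only [neg_mul, neg_neg, exp_cancel, exp_cancel']
  · rintro p q r ⟨n, hn⟩ ⟨m, hm⟩
    refine ⟨n + m, ?_⟩
    rw [boost_eq_iff] at hn hm ⊢
    push_cast
    constructor
    · rw [hm.1, hn.1, ← mul_assoc, ← Real.exp_add]; ring_nf
    · rw [hm.2, hn.2, ← mul_assoc, ← Real.exp_add]; ring_nf

lemma closed_expSet (θ₀ : ℝ) (hθ₀ : 0 < θ₀) :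
    IsClosed {x : ℝ | x = 0 ∨ ∃ n : ℤ, x = Real.exp (n * θ₀)} := by
  rw [← isOpen_compl_iff, isOpen_iff_mem_nhds]
  intro x hx
  simp only [Set.mem_compl_iff, Set.mem_setOf_eq, not_or, not_exists] at hx
  obtain ⟨hx0, hxn⟩ := hx
  rcases lt_or_gt_of_ne hx0 with hneg | hpos
  · refine Filter.mem_of_superset (Iio_mem_nhds hneg) ?_
    intro y hy
    simp only [Set.mem_Iio] at hy
    simp only [Set.mem_compl_iff, Set.mem_setOf_eq, not_or, not_exists]
    refine ⟨by linarith, fun n hn => ?_⟩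
    have := Real.exp_pos ((n : ℝ) * θ₀)
    linarith [hn ▸ hy]
  · set t := Real.log x with ht
    set n := ⌊t / θ₀⌋ with hnn
    have hxe : x = Real.exp t := (Real.exp_log hpos).symm
    have h1 : (n : ℝ) ≤ t / θ₀ := Int.floor_le _
    have h2 : t / θ₀ < (n : ℝ) + 1 := Int.lt_floor_add_one _
    have h1' : (n : ℝ) < t / θ₀ := by
      rcases h1.lt_or_eq with h | h
      · exact h
      · exfalso; apply hxn n; rw [hxe]; congr 1; field_simp at h ⊢; linarith [h]
    have hlo : (n : ℝ) * θ₀ < t := (lt_div_iff₀ hθ₀).mp h1'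
    have hhi : t < ((n : ℝ) + 1) * θ₀ := (div_lt_iff₀ hθ₀).mp h2
    refine Filter.mem_of_superset (Ioo_mem_nhds (a := Real.exp ((n:ℝ) * θ₀))
      (b := Real.exp (((n:ℝ)+1) * θ₀)) ?_ ?_) ?_
    · rw [hxe]; exact Real.exp_lt_exp.mpr hlo
    · rw [hxe]; exact Real.exp_lt_exp.mpr hhi
    · rintro y ⟨hy1, hy2⟩
      simp only [Set.mem_compl_iff, Set.mem_setOf_eq, not_or, not_exists]
      constructor
      · have := Real.exp_pos ((n : ℝ) * θ₀); intro h; rw [h] at hy1; linarith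
      · rintro m rfl
        have hm1 : (n : ℝ) * θ₀ < (m : ℝ) * θ₀ := Real.exp_lt_exp.mp hy1
        have hm2 : (m : ℝ) * θ₀ < ((n : ℝ) + 1) * θ₀ := Real.exp_lt_exp.mp hy2
        have : (n : ℝ) < m := by nlinarith
        have : (m : ℝ) < n + 1 := by nlinarith
        have h1 : n < m := by exact_mod_cast ‹(n:ℝ) < m›
        have h2 : m < n + 1 := by exact_mod_cast (by push_cast; linarith : (m:ℝ) < ((n:ℤ):ℝ) + 1)
        omega

lemma uv_ne_zero {z : ℝ × ℝ} (h : z ≠ 0) (h1 : z.1 + z.2 = 0) (h2 : z.1 - z.2 = 0) : False := by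
  apply h
  have hx : z.1 = 0 := by linarith
  have hy : z.2 = 0 := by linarith
  exact Prod.ext hx hy

lemma orbit_closed (θ₀ : ℝ) (hθ₀ : 0 < θ₀) (p₀ : PuncturedPlane) :
    IsClosed {q : PuncturedPlane | boostRel' θ₀ p₀ q} := by
  have hE := closed_expSet θ₀ hθ₀
  set u₀ := (p₀.val.1 + p₀.val.2) with hu₀
  set v₀ := (p₀.val.1 - p₀.val.2) with hv₀
  have hmem : ∀ q : PuncturedPlane, boostRel' θ₀ p₀ q ↔
      ∃ n : ℤ, q.val.1 + q.val.2 = Real.exp (n * θ₀) * u₀ ∧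
        q.val.1 - q.val.2 = Real.exp (-(n * θ₀)) * v₀ := by
    intro q
    constructor
    · rintro ⟨n, hn⟩; exact ⟨n, (boost_eq_iff _ _ _).mp hn⟩
    · rintro ⟨n, hn⟩; exact ⟨n, (boost_eq_iff _ _ _).mpr hn⟩
  by_cases hv0 : v₀ = 0
  · -- u₀ ≠ 0
    have hu0 : u₀ ≠ 0 := fun h => uv_ne_zero p₀.prop (hu₀ ▸ h) (hv₀ ▸ hv0)
    have hS : IsClosed {z : ℝ × ℝ | z.1 - z.2 = 0 ∧
        (z.1 + z.2) / u₀ ∈ {x : ℝ | x = 0 ∨ ∃ n : ℤ, x = Real.exp (n * θ₀)}} := by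
      exact (isClosed_eq (by fun_prop) continuous_const).inter (hE.preimage (by fun_prop))
    have heq : {q : PuncturedPlane | boostRel' θ₀ p₀ q} =
        Subtype.val ⁻¹' {z : ℝ × ℝ | z.1 - z.2 = 0 ∧
          (z.1 + z.2) / u₀ ∈ {x : ℝ | x = 0 ∨ ∃ n : ℤ, x = Real.exp (n * θ₀)}} := by
      ext q
      simp only [Set.mem_setOf_eq, Set.mem_preimage, hmem q]
      constructor
      · rintro ⟨n, h1, h2⟩
        refine ⟨by rw [h2, hv0]; ring, Or.inr ⟨n, ?_⟩⟩
        rw [h1]; field_simp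
      · rintro ⟨h2, h1⟩
        rcases h1 with h1 | ⟨n, h1⟩
        · exact (uv_ne_zero q.prop ((div_eq_zero_iff.mp h1).resolve_right hu0) h2).elim
        · exact ⟨n, (div_eq_iff hu0).mp h1, by rw [h2, hv0]; ring⟩
    rw [heq]
    exact hS.preimage continuous_subtype_val
  · by_cases hu0 : u₀ = 0
    · -- v₀ ≠ 0
      have hS : IsClosed {z : ℝ × ℝ | z.1 + z.2 = 0 ∧
          (z.1 - z.2) / v₀ ∈ {x : ℝ | x = 0 ∨ ∃ n : ℤ, x = Real.exp (n * θ₀)}} :=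
        (isClosed_eq (by fun_prop) continuous_const).inter (hE.preimage (by fun_prop))
      have heq : {q : PuncturedPlane | boostRel' θ₀ p₀ q} =
          Subtype.val ⁻¹' {z : ℝ × ℝ | z.1 + z.2 = 0 ∧
            (z.1 - z.2) / v₀ ∈ {x : ℝ | x = 0 ∨ ∃ n : ℤ, x = Real.exp (n * θ₀)}} := by
        ext q
        simp only [Set.mem_setOf_eq, Set.mem_preimage, hmem q]
        constructor
        · rintro ⟨n, h1, h2⟩
          refine ⟨by rw [h1, hu0]; ring, Or.inr ⟨-n, ?_⟩⟩
          rw [h2]; push_cast; rw [neg_mul]; field_simp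
        · rintro ⟨h1, h2⟩
          rcases h2 with h2 | ⟨n, h2⟩
          · exact (uv_ne_zero q.prop h1 ((div_eq_zero_iff.mp h2).resolve_right hv0)).elim
          · refine ⟨-n, by rw [h1, hu0]; ring, ?_⟩
            have := (div_eq_iff hv0).mp h2
            rw [this]; push_cast; ring_nf
      rw [heq]
      exact hS.preimage continuous_subtype_val
    · -- u₀ ≠ 0 and v₀ ≠ 0
      have hS : IsClosed {z : ℝ × ℝ | (z.1 + z.2) * (z.1 - z.2) = u₀ * v₀ ∧
          (z.1 + z.2) / u₀ ∈ {x : ℝ | x = 0 ∨ ∃ n : ℤ, x = Real.exp (n * θ₀)}} :=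
        (isClosed_eq (by fun_prop) continuous_const).inter (hE.preimage (by fun_prop))
      have heq : {q : PuncturedPlane | boostRel' θ₀ p₀ q} =
          Subtype.val ⁻¹' {z : ℝ × ℝ | (z.1 + z.2) * (z.1 - z.2) = u₀ * v₀ ∧
            (z.1 + z.2) / u₀ ∈ {x : ℝ | x = 0 ∨ ∃ n : ℤ, x = Real.exp (n * θ₀)}} := by
        ext q
        simp only [Set.mem_setOf_eq, Set.mem_preimage, hmem q]
        constructor
        · rintro ⟨n, h1, h2⟩
          have hone : Real.exp ((n : ℝ) * θ₀) * Real.exp (-((n : ℝ) * θ₀)) = 1 := by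
            rw [← Real.exp_add]; simp
          refine ⟨?_, Or.inr ⟨n, by rw [h1]; field_simp⟩⟩
          rw [h1, h2]; linear_combination (u₀ * v₀) * hone
        · rintro ⟨hprod, h1⟩
          rcases h1 with h1 | ⟨n, h1⟩
          · exfalso
            have : q.val.1 + q.val.2 = 0 := (div_eq_zero_iff.mp h1).resolve_right hu0
            rw [this] at hprod
            exact (mul_ne_zero hu0 hv0) (by linarith)
          · have hu : q.val.1 + q.val.2 = Real.exp ((n : ℝ) * θ₀) * u₀ :=
              (div_eq_iff hu0).mp h1
            have hone : Real.exp ((n : ℝ) * θ₀) * Real.exp (-((n : ℝ) * θ₀)) = 1 := by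
              rw [← Real.exp_add]; simp
            have he : Real.exp ((n : ℝ) * θ₀) ≠ 0 := Real.exp_ne_zero _
            refine ⟨n, hu, ?_⟩
            rw [hu] at hprod
            apply mul_left_cancel₀ (mul_ne_zero he hu0)
            rw [hprod]
            linear_combination (-(u₀ * v₀)) * hone
      rw [heq]
      exact hS.preimage continuous_subtype_val

theorem quotient_punctured_plane_T1_not_T2 (θ₀ : ℝ) (hθ₀ : 0 < θ₀) :
    T1Space (Quot (boostRel' θ₀)) ∧ ¬ T2Space (Quot (boostRel' θ₀)) := by
  constructor
  · constructor
    intro x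
    induction x using Quot.ind with
    | _ p₀ =>
      rw [← isQuotientMap_quot_mk.isClosed_preimage]
      have heq : Quot.mk (boostRel' θ₀) ⁻¹' {Quot.mk (boostRel' θ₀) p₀} =
          {q | boostRel' θ₀ p₀ q} := by
        ext q
        simp only [Set.mem_preimage, Set.mem_singleton_iff, Set.mem_setOf_eq]
        rw [Quot.eq, (boostRel'_equiv θ₀).eqvGen_iff]
        exact ⟨(boostRel'_equiv θ₀).symm, (boostRel'_equiv θ₀).symm⟩
      rw [heq]
      exact orbit_closed θ₀ hθ₀ p₀
  · intro hT2
    -- the two non-separated points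
    have hp : ((1 / 2 : ℝ), (1 / 2 : ℝ)) ≠ (0 : ℝ × ℝ) := by
      simp [Prod.ext_iff]
    have hq : ((1 / 2 : ℝ), (-(1 / 2) : ℝ)) ≠ (0 : ℝ × ℝ) := by
      simp [Prod.ext_iff]
    set p : PuncturedPlane := ⟨((1 / 2 : ℝ), (1 / 2 : ℝ)), hp⟩ with hpdef
    set q : PuncturedPlane := ⟨((1 / 2 : ℝ), (-(1 / 2) : ℝ)), hq⟩ with hqdef
    -- the witnessing sequence
    have hwne : ∀ n : ℕ, ((Real.exp (-(n * θ₀)) + 1) / 2, (Real.exp (-(n * θ₀)) - 1) / 2) ≠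
        (0 : ℝ × ℝ) := by
      intro n h
      rw [Prod.ext_iff] at h
      have := Real.exp_pos (-(n * θ₀))
      have h1 := h.1
      simp only [Prod.fst_zero] at h1
      linarith
    set w : ℕ → PuncturedPlane := fun n =>
      ⟨((Real.exp (-(n * θ₀)) + 1) / 2, (Real.exp (-(n * θ₀)) - 1) / 2), hwne n⟩ with hwdef
    have hw'ne : ∀ n : ℕ, ((1 + Real.exp (-(n * θ₀))) / 2, (1 - Real.exp (-(n * θ₀))) / 2) ≠
        (0 : ℝ × ℝ) := by
      intro n h
      rw [Prod.ext_iff] at h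
      have := Real.exp_pos (-(n * θ₀))
      have h1 := h.1
      simp only [Prod.fst_zero] at h1
      linarith
    set w' : ℕ → PuncturedPlane := fun n =>
      ⟨((1 + Real.exp (-(n * θ₀))) / 2, (1 - Real.exp (-(n * θ₀))) / 2), hw'ne n⟩ with hw'def
    -- w' n is the (n)-th boost of w n
    have hrel : ∀ n : ℕ, boostRel' θ₀ (w n) (w' n) := by
      intro n
      refine ⟨(n : ℤ), ?_⟩
      rw [boost_eq_iff]
      push_cast
      constructor
      · show (1 + Real.exp (-(n * θ₀))) / 2 + (1 - Real.exp (-(n * θ₀))) / 2 = _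
        have : Real.exp ((n : ℝ) * θ₀) * Real.exp (-(n * θ₀)) = 1 := by
          rw [← Real.exp_add]; simp
        show (1 + Real.exp (-(n * θ₀))) / 2 + (1 - Real.exp (-(n * θ₀))) / 2 =
          Real.exp ((n : ℝ) * θ₀) *
            ((Real.exp (-(n * θ₀)) + 1) / 2 + (Real.exp (-(n * θ₀)) - 1) / 2)
        linear_combination -this
      · show (1 + Real.exp (-(n * θ₀))) / 2 - (1 - Real.exp (-(n * θ₀))) / 2 =
          Real.exp (-((n : ℝ) * θ₀)) *
            ((Real.exp (-(n * θ₀)) + 1) / 2 - (Real.exp (-(n * θ₀)) - 1) / 2)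
        ring
    -- exp(-(n θ₀)) → 0
    have hexp : Tendsto (fun n : ℕ => Real.exp (-(n * θ₀))) atTop (𝓝 0) := by
      apply Real.tendsto_exp_atBot.comp
      apply tendsto_neg_atTop_atBot.comp
      exact Tendsto.atTop_mul_const hθ₀ tendsto_natCast_atTop_atTop
    -- w → q
    have hwq : Tendsto w atTop (𝓝 q) := by
      refine tendsto_subtype_rng.mpr ?_
      rw [Prod.tendsto_iff]
      constructor
      · have h := (hexp.add_const 1).div_const 2
        convert h using 2
        norm_num
      · have h := (hexp.sub_const 1).div_const 2
        convert h using 2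
        norm_num
    -- w' → p
    have hw'p : Tendsto w' atTop (𝓝 p) := by
      refine tendsto_subtype_rng.mpr ?_
      rw [Prod.tendsto_iff]
      constructor
      · have h := (hexp.const_add 1).div_const 2
        convert h using 2
        norm_num
      · have h := (hexp.const_sub 1).div_const 2
        convert h using 2
        norm_num
    -- pass to the quotient
    have h1 : Tendsto (fun n => Quot.mk (boostRel' θ₀) (w n)) atTop
        (𝓝 (Quot.mk (boostRel' θ₀) q)) :=
      (continuous_quot_mk.tendsto q).comp hwq
    have h2 : Tendsto (fun n => Quot.mk (boostRel' θ₀) (w n)) atTop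
        (𝓝 (Quot.mk (boostRel' θ₀) p)) := by
      have : (fun n => Quot.mk (boostRel' θ₀) (w n)) =
          (fun n => Quot.mk (boostRel' θ₀) (w' n)) := by
        funext n; exact Quot.sound (hrel n)
      rw [this]
      exact (continuous_quot_mk.tendsto p).comp hw'p
    have heq : Quot.mk (boostRel' θ₀) q = Quot.mk (boostRel' θ₀) p :=
      tendsto_nhds_unique h1 h2
    rw [Quot.eq, (boostRel'_equiv θ₀).eqvGen_iff] at heq
    obtain ⟨n, hn⟩ := heq
    rw [boost_eq_iff] at hn
    have h1 := hn.1
    simp only [hpdef, hqdef] at h1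
    norm_num at h1
end

section
/- Let θ₀ > 0, let S⁺ = {(T,X) ∈ ℝ² : T < X}, and let G be the group generated by H_{θ₀}. Then the quotient S⁺/G with the quotient topology is Hausdorff. -/
/-- The open half-plane S⁺ = {T < X} with the subspace topology. -/
def HalfPlane : Type := {p : ℝ × ℝ // p.1 < p.2}

instance : TopologicalSpace HalfPlane := instTopologicalSpaceSubtype

/-- Two points of S⁺ are related iff one is the image of the other under an iterate of the
boost H_{θ₀}. -/
def boostRelS (θ₀ : ℝ) (p q : HalfPlane) : Prop := ∃ n : ℤ, q.val = boost (n * θ₀) p.val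

/-- The invariant map. -/
noncomputable def invMap (θ₀ : ℝ) (p : HalfPlane) : ℝ × AddCircle θ₀ :=
  (p.val.2 ^ 2 - p.val.1 ^ 2, ((Real.log (p.val.2 - p.val.1) : ℝ) : AddCircle θ₀))

lemma boost_diff (θ : ℝ) (p : ℝ × ℝ) :
    (boost θ p).2 - (boost θ p).1 = (p.2 - p.1) * Real.exp (-θ) := by
  simp only [boost]
  linear_combination (p.2 - p.1) * Real.cosh_sub_sinh θ

lemma boost_sum (θ : ℝ) (p : ℝ × ℝ) :
    (boost θ p).2 + (boost θ p).1 = (p.2 + p.1) * Real.exp θ := by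
  simp only [boost]
  linear_combination (p.2 + p.1) * Real.cosh_add_sinh θ

lemma invMap_rel (θ₀ : ℝ) {p q : HalfPlane} (h : boostRelS θ₀ p q) :
    invMap θ₀ p = invMap θ₀ q := by
  obtain ⟨n, hn⟩ := h
  have hu : (0:ℝ) < p.val.2 - p.val.1 := sub_pos.mpr p.property
  have hd := boost_diff (n * θ₀) p.val
  have hs := boost_sum (n * θ₀) p.val
  rw [← hn] at hd hs
  have hexp : Real.exp (-(n * θ₀)) * Real.exp (n * θ₀) = 1 := by
    rw [← Real.exp_add]; simp
  unfold invMap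
  refine Prod.ext ?_ ?_
  · show p.val.2 ^ 2 - p.val.1 ^ 2 = q.val.2 ^ 2 - q.val.1 ^ 2
    linear_combination -((q.val.2 + q.val.1) * hd
      + ((p.val.2 - p.val.1) * Real.exp (-(n * θ₀))) * hs
      + ((p.val.2 - p.val.1) * (p.val.2 + p.val.1)) * hexp)
  · show ((Real.log (p.val.2 - p.val.1) : ℝ) : AddCircle θ₀)
        = ((Real.log (q.val.2 - q.val.1) : ℝ) : AddCircle θ₀)
    have : Real.log (q.val.2 - q.val.1)
        = Real.log (p.val.2 - p.val.1) + (-(n * θ₀)) := by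
      rw [hd, Real.log_mul (ne_of_gt hu) (Real.exp_ne_zero _), Real.log_exp]
    rw [this]
    rw [QuotientAddGroup.eq]
    refine AddSubgroup.mem_zmultiples_iff.mpr ⟨-n, ?_⟩
    rw [zsmul_eq_mul]
    push_cast
    ring

lemma invMap_inj (θ₀ : ℝ) (hθ₀ : 0 < θ₀) {p q : HalfPlane}
    (h : invMap θ₀ p = invMap θ₀ q) : boostRelS θ₀ p q := by
  have hup : (0:ℝ) < p.val.2 - p.val.1 := sub_pos.mpr p.property
  have huq : (0:ℝ) < q.val.2 - q.val.1 := sub_pos.mpr q.property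
  have h1 : p.val.2 ^ 2 - p.val.1 ^ 2 = q.val.2 ^ 2 - q.val.1 ^ 2 :=
    congrArg Prod.fst h
  have h2 := congrArg Prod.snd h
  simp only [invMap] at h2
  rw [QuotientAddGroup.eq] at h2
  obtain ⟨k, hk⟩ := AddSubgroup.mem_zmultiples_iff.mp h2
  -- log u_q - log u_p = k * θ₀
  have hk' : Real.log (q.val.2 - q.val.1) = Real.log (p.val.2 - p.val.1) + k * θ₀ := by
    have : (k : ℝ) * θ₀ = -Real.log (p.val.2 - p.val.1) + Real.log (q.val.2 - q.val.1) := by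
      rw [← hk]; push_cast [zsmul_eq_mul]; ring
    linarith [this]
  have hd : q.val.2 - q.val.1 = (p.val.2 - p.val.1) * Real.exp (k * θ₀) := by
    have := Real.exp_log huq
    rw [← this, hk', Real.exp_add, Real.exp_log hup]
  have hs : q.val.2 + q.val.1 = (p.val.2 + p.val.1) * Real.exp (-(k * θ₀)) := by
    have hexp : Real.exp (k * θ₀) * Real.exp (-(k * θ₀)) = 1 := by
      rw [← Real.exp_add]; simp
    have key : (q.val.2 - q.val.1) * (q.val.2 + q.val.1)
        = (p.val.2 - p.val.1) * (p.val.2 + p.val.1) := by linear_combination (-1 : ℝ) * h1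
    have hne : (p.val.2 - p.val.1) * Real.exp (k * θ₀) ≠ 0 :=
      mul_ne_zero (ne_of_gt hup) (Real.exp_ne_zero _)
    refine mul_left_cancel₀ hne ?_
    linear_combination (-(q.val.2 + q.val.1)) * hd + key
      - ((p.val.2 - p.val.1) * (p.val.2 + p.val.1)) * hexp
  refine ⟨-k, ?_⟩
  have hc := Real.cosh_eq ((-k : ℝ) * θ₀)
  have hsn := Real.sinh_eq ((-k : ℝ) * θ₀)
  have e1 : ((-k : ℤ) : ℝ) * θ₀ = -(k * θ₀) := by push_cast; ring
  refine Prod.ext ?_ ?_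
  · show q.val.1 = p.val.1 * Real.cosh (((-k : ℤ) : ℝ) * θ₀)
        + p.val.2 * Real.sinh (((-k : ℤ) : ℝ) * θ₀)
    rw [e1, Real.cosh_eq, Real.sinh_eq, neg_neg]
    linarith [hd, hs]
  · show q.val.2 = p.val.1 * Real.sinh (((-k : ℤ) : ℝ) * θ₀)
        + p.val.2 * Real.cosh (((-k : ℤ) : ℝ) * θ₀)
    rw [e1, Real.cosh_eq, Real.sinh_eq, neg_neg]
    linarith [hd, hs]

lemma invMap_continuous (θ₀ : ℝ) : Continuous (invMap θ₀) := by
  have hval : Continuous (fun p : HalfPlane => p.val) := continuous_subtype_val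
  have h1 : Continuous (fun p : HalfPlane => p.val.2 ^ 2 - p.val.1 ^ 2) := by
    fun_prop
  have h2 : Continuous (fun p : HalfPlane => Real.log (p.val.2 - p.val.1)) := by
    rw [continuous_iff_continuousAt]
    intro p
    have hu : (0:ℝ) < p.val.2 - p.val.1 := sub_pos.mpr p.property
    have hc : Continuous (fun p : HalfPlane => p.val.2 - p.val.1) := by fun_prop
    exact hc.continuousAt.log (ne_of_gt hu)
  exact h1.prodMk (continuous_quotient_mk'.comp h2)

theorem quotient_half_plane_hausdorff (θ₀ : ℝ) (hθ₀ : 0 < θ₀) :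
    T2Space (Quot (boostRelS θ₀)) := by
  have hresp : ∀ a b, boostRelS θ₀ a b → invMap θ₀ a = invMap θ₀ b :=
    fun a b h => invMap_rel θ₀ h
  refine T2Space.of_injective_continuous (f := Quot.lift (invMap θ₀) hresp) ?_ ?_
  · intro x y
    induction x using Quot.ind with | _ a =>
    induction y using Quot.ind with | _ b =>
    intro h
    exact Quot.sound (invMap_inj θ₀ hθ₀ h)
  · exact continuous_quot_lift hresp (invMap_continuous θ₀)
end

section
/- In the quotient Y = ℝ²/G of the plane by the group generated by a boost H_{θ₀} with θ₀ > 0, the class of the origin [0] is a closed point, while for any point x on an open semi-diagonal (e.g. x = (T,T) with T > 0) the singleton {[x]} is not closed in Y. -/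
lemma boost_zero_rap (p : ℝ × ℝ) : boost 0 p = p := by
  simp [boost]

lemma boost_boost (a b : ℝ) (p : ℝ × ℝ) : boost a (boost b p) = boost (a + b) p := by
  simp only [boost, Real.cosh_add, Real.sinh_add, Prod.mk.injEq]
  constructor <;> ring

lemma boost_origin (θ : ℝ) : boost θ (0 : ℝ × ℝ) = 0 := by
  simp [boost]

lemma boostRel_equiv (θ₀ : ℝ) : Equivalence (boostRel θ₀) := by
  constructor
  · intro p; exact ⟨0, by simp [boost_zero_rap]⟩
  · rintro p q ⟨n, rfl⟩
    refine ⟨-n, ?_⟩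
    rw [boost_boost]
    rw [show ((-n : ℤ) : ℝ) * θ₀ + (n : ℝ) * θ₀ = 0 by push_cast; ring, boost_zero_rap]
  · rintro p q r ⟨n, rfl⟩ ⟨m, rfl⟩
    refine ⟨m + n, ?_⟩
    rw [boost_boost]
    congr 1
    push_cast; ring

theorem origin_closed_diagonal_points_not_closed (θ₀ : ℝ) (hθ₀ : 0 < θ₀) :
    IsClosed {Quot.mk (boostRel θ₀) (0 : ℝ × ℝ)} ∧
    ∀ T : ℝ, 0 < T → ¬ IsClosed {Quot.mk (boostRel θ₀) ((T, T) : ℝ × ℝ)} := by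
  have heq := boostRel_equiv θ₀
  have hq : Topology.IsQuotientMap (Quot.mk (boostRel θ₀)) := isQuotientMap_quot_mk
  constructor
  · rw [← hq.isClosed_preimage]
    have hset : Quot.mk (boostRel θ₀) ⁻¹' {Quot.mk (boostRel θ₀) (0 : ℝ × ℝ)}
        = {(0 : ℝ × ℝ)} := by
      ext p
      simp only [Set.mem_preimage, Set.mem_singleton_iff, Quot.eq, heq.eqvGen_iff]
      constructor
      · rintro ⟨n, hn⟩
        have h2 := congrArg (boost (-((n : ℝ) * θ₀))) hn
        rw [boost_boost, neg_add_cancel, boost_zero_rap, boost_origin] at h2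
        exact h2.symm
      · rintro rfl
        exact ⟨0, by rw [boost_origin]⟩
    rw [hset]
    exact isClosed_singleton
  · intro T hT hcl
    rw [← hq.isClosed_preimage] at hcl
    set S := Quot.mk (boostRel θ₀) ⁻¹' {Quot.mk (boostRel θ₀) ((T, T) : ℝ × ℝ)} with hS
    -- the sequence boost(-nθ₀)(T,T) lies in S and tends to 0
    have hmem : ∀ n : ℕ, boost (-(n : ℝ) * θ₀) (T, T) ∈ S := by
      intro n
      simp only [hS, Set.mem_preimage, Set.mem_singleton_iff]
      apply Quot.sound
      refine ⟨n, ?_⟩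
      rw [boost_boost]
      rw [show ((n : ℤ) : ℝ) * θ₀ + -(n : ℝ) * θ₀ = 0 by push_cast; ring, boost_zero_rap]
    have hcomp : ∀ n : ℕ, boost (-(n : ℝ) * θ₀) (T, T)
        = (T * Real.exp (-(n : ℝ) * θ₀), T * Real.exp (-(n : ℝ) * θ₀)) := by
      intro n
      simp only [boost, ← Real.cosh_add_sinh]
      rw [Prod.mk.injEq]
      constructor <;> ring
    have htend1 : Filter.Tendsto (fun n : ℕ => T * Real.exp (-(n : ℝ) * θ₀))
        Filter.atTop (nhds 0) := by
      have h1 : Filter.Tendsto (fun n : ℕ => -(n : ℝ) * θ₀) Filter.atTop Filter.atBot := by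
        have h0 := (tendsto_natCast_atTop_atTop (R := ℝ)).atTop_mul_const hθ₀
        have := Filter.tendsto_neg_atBot_iff.mpr h0
        simpa [neg_mul] using this
      have h2 := Real.tendsto_exp_atBot.comp h1
      have := h2.const_mul T
      simpa using this
    have htend : Filter.Tendsto (fun n : ℕ => boost (-(n : ℝ) * θ₀) (T, T))
        Filter.atTop (nhds (0 : ℝ × ℝ)) := by
      simp only [hcomp]
      exact htend1.prodMk_nhds htend1
    have h0 : (0 : ℝ × ℝ) ∈ S :=
      hcl.mem_of_tendsto htend (Filter.Eventually.of_forall hmem)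
    simp only [hS, Set.mem_preimage, Set.mem_singleton_iff, Quot.eq, heq.eqvGen_iff] at h0
    obtain ⟨n, hn⟩ := h0
    rw [boost_origin] at hn
    have : T = 0 := congrArg Prod.fst hn
    linarith
end

section
/- Let (p,v) and (p',v') be incomplete geodesic data in Q₄ with exit parameters φ = φ(p,v) and φ' = φ(p',v'), hitting the same side ε' of the boundary (or with ξ(p,v)=0). If each coordinate of p' and v' differs from that of p and v by less than δ, where 2δ < |ε'v_x - v_t|, then |φ' - φ| ≤ 2δ(1 + φ)/(|ε'v_x - v_t| - 2δ). -/
/-- The open upper quadrant Q₄ = {(t,x) : t > |x|} of Minkowski ℝ². -/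
def Quad : Set (ℝ × ℝ) := {p | |p.2| < p.1}

/-- The hit-side sign ε of incomplete geodesic data (p,v). -/
noncomputable def hitSign (p v : ℝ × ℝ) : ℝ := Real.sign (p.1 * v.2 - p.2 * v.1)

/-- The forward exit parameter φ of incomplete geodesic data (p,v). -/
noncomputable def exitTime (p v : ℝ × ℝ) : ℝ :=
  (p.1 - hitSign p v * p.2) / (hitSign p v * v.2 - v.1)

/-- The x-coordinate ξ of the exit point of incomplete geodesic data (p,v). -/
noncomputable def exitCoord (p v : ℝ × ℝ) : ℝ :=
  (p.1 * v.2 - p.2 * v.1) / (hitSign p v * v.2 - v.1)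

lemma abs_sign_le_one' (r : ℝ) : |Real.sign r| ≤ 1 := by
  rcases lt_trichotomy r 0 with h | h | h
  · rw [Real.sign_of_neg h]; norm_num
  · rw [h, Real.sign_zero]; norm_num
  · rw [Real.sign_of_pos h]; norm_num

lemma not_closure_quad (v : ℝ × ℝ) (hv : v ∉ closure Quad) : v.1 < |v.2| := by
  by_contra h
  push_neg at h
  refine hv ?_
  rw [Metric.mem_closure_iff]
  intro ε hε
  refine ⟨(v.1 + ε/2, v.2), ?_, ?_⟩
  · simp only [Quad, Set.mem_setOf_eq]
    linarith
  · rw [Prod.dist_eq]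
    simp only [Real.dist_eq]
    have : |v.1 - (v.1 + ε/2)| = ε/2 := by rw [abs_of_nonpos (by linarith)]; ring
    rw [this]
    simp only [sub_self, abs_zero]
    rw [max_eq_left (by linarith)]
    linarith

lemma Dpos_quad (p v : ℝ × ℝ) (hp : |p.2| < p.1) (hv : v.1 < |v.2|) :
    0 < hitSign p v * v.2 - v.1 := by
  have h1 := abs_lt.mp hp
  rcases lt_trichotomy (p.1 * v.2 - p.2 * v.1) 0 with hs | hs | hs
  · rw [hitSign, Real.sign_of_neg hs]
    rcases abs_cases v.2 with ⟨h2, h3⟩ | ⟨h2, h3⟩ <;> nlinarith [hv, h1.1, h1.2]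
  · rw [hitSign, hs, Real.sign_zero]
    rcases abs_cases v.2 with ⟨h2, h3⟩ | ⟨h2, h3⟩ <;> nlinarith [hv, h1.1, h1.2]
  · rw [hitSign, Real.sign_of_pos hs]
    rcases abs_cases v.2 with ⟨h2, h3⟩ | ⟨h2, h3⟩ <;> nlinarith [hv, h1.1, h1.2]

lemma key_quad (p v : ℝ × ℝ) (e : ℝ) (hp : |p.2| < p.1) (hv : v.1 < |v.2|)
    (he : |e| ≤ 1) (hcase : e = hitSign p v ∨ hitSign p v = 0) :
    0 < p.1 - e * p.2 ∧ 0 < e * v.2 - v.1 ∧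
      exitTime p v = (p.1 - e * p.2) / (e * v.2 - v.1) := by
  have hT : 0 < p.1 := lt_of_le_of_lt (abs_nonneg _) hp
  have hNum : 0 < p.1 - e * p.2 := by
    have h : |e * p.2| ≤ |p.2| := by
      rw [abs_mul]
      exact mul_le_of_le_one_left (abs_nonneg _) he
    have := neg_abs_le (e * p.2)
    have := le_abs_self (e * p.2)
    linarith
  rcases hcase with h | h
  · exact ⟨hNum, by rw [h]; exact Dpos_quad p v hp hv, by rw [exitTime, h]⟩
  · have hs : p.1 * v.2 - p.2 * v.1 = 0 := Real.sign_eq_zero_iff.mp h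
    have hvt : v.1 < 0 := by
      have := Dpos_quad p v hp hv
      rw [h] at this; linarith
    have hv2 : v.2 = p.2 * v.1 / p.1 := by
      field_simp
      linarith
    have hDen : e * v.2 - v.1 = (-v.1) * (p.1 - e * p.2) / p.1 := by
      rw [hv2]; field_simp; ring
    have hDpos : 0 < e * v.2 - v.1 := by
      rw [hDen]
      exact div_pos (mul_pos (by linarith) hNum) hT
    refine ⟨hNum, hDpos, ?_⟩
    rw [exitTime, h, hDen]
    have h0 : v.1 ≠ 0 := ne_of_lt hvt
    have h1 : p.1 - e * p.2 ≠ 0 := ne_of_gt hNum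
    simp only [zero_mul, sub_zero, zero_sub]
    rw [div_div_eq_mul_div, mul_comm (-v.1), mul_div_mul_left _ _ h1]

theorem exit_time_continuity_estimate (p v p' v' : ℝ × ℝ) (δ : ℝ) (hδ : 0 < δ)
    (hp : p ∈ Quad) (hv : v ∉ closure Quad) (hp' : p' ∈ Quad) (hv' : v' ∉ closure Quad)
    (hside : hitSign p' v' = hitSign p v ∨ exitCoord p v = 0)
    (h1 : |p.1 - p'.1| < δ) (h2 : |p.2 - p'.2| < δ)
    (h3 : |v.1 - v'.1| < δ) (h4 : |v.2 - v'.2| < δ)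
    (hδ2 : 2 * δ < |hitSign p' v' * v.2 - v.1|) :
    |exitTime p' v' - exitTime p v| ≤
      2 * δ * (1 + exitTime p v) / (|hitSign p' v' * v.2 - v.1| - 2 * δ) := by
  have hp1 : |p.2| < p.1 := hp
  have hp1' : |p'.2| < p'.1 := hp'
  have hv1 := not_closure_quad v hv
  have hv1' := not_closure_quad v' hv'
  set e := hitSign p' v' with he
  have heabs : |e| ≤ 1 := abs_sign_le_one' _
  have hcase : e = hitSign p v ∨ hitSign p v = 0 := by
    rcases hside with h | h
    · exact Or.inl h
    · right
      have hD := Dpos_quad p v hp1 hv1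
      rw [exitCoord, div_eq_zero_iff] at h
      rcases h with h | h
      · rw [hitSign, h, Real.sign_zero]
      · linarith
  obtain ⟨hN0, hD0, hphi⟩ := key_quad p v e hp1 hv1 heabs hcase
  obtain ⟨hN', hD', hphi'⟩ := key_quad p' v' e hp1' hv1' heabs (Or.inl he)
  have habsD : |e * v.2 - v.1| = e * v.2 - v.1 := abs_of_pos hD0
  rw [habsD] at hδ2 ⊢
  set D0 := e * v.2 - v.1 with hD0def
  set D' := e * v'.2 - v'.1 with hD'def
  set N0 := p.1 - e * p.2 with hN0def
  set N' := p'.1 - e * p'.2 with hN'def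
  set φ := exitTime p v with hφdef
  set φ' := exitTime p' v' with hφ'def
  have hDdiff : |D' - D0| ≤ 2 * δ := by
    have heq : D' - D0 = e * (v'.2 - v.2) - (v'.1 - v.1) := by
      rw [hD'def, hD0def]; ring
    rw [heq]
    have t1 : |e * (v'.2 - v.2)| ≤ δ := by
      rw [abs_mul]
      calc |e| * |v'.2 - v.2| ≤ 1 * |v'.2 - v.2| :=
            mul_le_mul_of_nonneg_right heabs (abs_nonneg _)
        _ = |v'.2 - v.2| := one_mul _
        _ ≤ δ := by rw [abs_sub_comm]; exact le_of_lt h4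
    have t2 : |v'.1 - v.1| ≤ δ := by rw [abs_sub_comm]; exact le_of_lt h3
    calc |e * (v'.2 - v.2) - (v'.1 - v.1)| ≤ |e * (v'.2 - v.2)| + |v'.1 - v.1| :=
          abs_sub _ _
      _ ≤ 2 * δ := by linarith
  have hNdiff : |N' - N0| ≤ 2 * δ := by
    have heq : N' - N0 = (p'.1 - p.1) - e * (p'.2 - p.2) := by
      rw [hN'def, hN0def]; ring
    rw [heq]
    have t1 : |e * (p'.2 - p.2)| ≤ δ := by
      rw [abs_mul]
      calc |e| * |p'.2 - p.2| ≤ 1 * |p'.2 - p.2| :=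
            mul_le_mul_of_nonneg_right heabs (abs_nonneg _)
        _ = |p'.2 - p.2| := one_mul _
        _ ≤ δ := by rw [abs_sub_comm]; exact le_of_lt h2
    have t2 : |p'.1 - p.1| ≤ δ := by rw [abs_sub_comm]; exact le_of_lt h1
    calc |(p'.1 - p.1) - e * (p'.2 - p.2)| ≤ |p'.1 - p.1| + |e * (p'.2 - p.2)| :=
          abs_sub _ _
      _ ≤ 2 * δ := by linarith
  have hD'lb : D0 - 2 * δ ≤ D' := by
    have := (abs_le.mp hDdiff).1
    linarith
  have hD'pos : 0 < D' := by linarith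
  have hφnn : 0 ≤ φ := by
    rw [hphi]
    exact le_of_lt (div_pos hN0 hD0)
  have hkey : φ' - φ = ((N' - N0) - φ * (D' - D0)) / D' := by
    rw [hphi, hphi']
    field_simp
    ring
  rw [hkey, abs_div, abs_of_pos hD'pos]
  have hnumnn : 0 ≤ 2 * δ * (1 + φ) := by nlinarith
  refine div_le_div₀ hnumnn ?_ (by linarith) hD'lb
  calc |(N' - N0) - φ * (D' - D0)| ≤ |N' - N0| + |φ * (D' - D0)| := abs_sub _ _
    _ = |N' - N0| + φ * |D' - D0| := by rw [abs_mul, abs_of_nonneg hφnn]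
    _ ≤ 2 * δ + φ * (2 * δ) := by
        have := mul_le_mul_of_nonneg_left hDdiff hφnn
        linarith
    _ = 2 * δ * (1 + φ) := by ring
end

section
/- The map ξ: G_I → ℝ sending incomplete geodesic data (p,v) ∈ Q₄ × (closure(Q₄))ᶜ to the x-coordinate of its exit point, ξ(p,v) = (t·v_x - x·v_t)/(ε·v_x - v_t) with ε = sign(t·v_x - x·v_t), is continuous, open and surjective; consequently the quotient of G_I by the relation ξ(γ₁) = ξ(γ₂) is homeomorphic to ℝ. -/
/-- The set G_I of incomplete geodesic data of Q₄: initial point in Q₄ and velocity outside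
the closure of Q₄, with the subspace topology from ℝ⁴. -/
def GI : Type := {x : (ℝ × ℝ) × (ℝ × ℝ) // x.1 ∈ Quad ∧ x.2 ∉ closure Quad}

instance : TopologicalSpace GI := instTopologicalSpaceSubtype

/-- The x-coordinate of the exit point of an incomplete geodesic. -/
noncomputable def exitXi (g : GI) : ℝ :=
  let t := g.val.1.1; let x := g.val.1.2; let vt := g.val.2.1; let vx := g.val.2.2
  let ε : ℝ := Real.sign (t * vx - x * vt)
  (t * vx - x * vt) / (ε * vx - vt)

lemma mem_closure_quad_iff (p : ℝ × ℝ) : p ∈ closure Quad ↔ |p.2| ≤ p.1 := by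
  constructor
  · intro hp
    have hcl : IsClosed {q : ℝ × ℝ | |q.2| ≤ q.1} :=
      isClosed_le (continuous_abs.comp continuous_snd) continuous_fst
    have hsub : Quad ⊆ {q : ℝ × ℝ | |q.2| ≤ q.1} := fun q hq => le_of_lt (show |q.2| < q.1 from hq)
    exact closure_minimal hsub hcl hp
  · intro hp
    have htend : Filter.Tendsto (fun n : ℕ => ((p.1 + 1/(n+1) : ℝ), p.2)) Filter.atTop (nhds p) := by
      have h1 : Filter.Tendsto (fun n : ℕ => (p.1 + 1/(n+1) : ℝ)) Filter.atTop (nhds p.1) := by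
        have := tendsto_one_div_add_atTop_nhds_zero_nat (𝕜 := ℝ)
        have h2 := Filter.Tendsto.const_add p.1 this
        simpa using h2
      simpa using h1.prodMk_nhds (tendsto_const_nhds (x := p.2))
    refine mem_closure_of_tendsto htend ?_
    filter_upwards with n
    show |p.2| < p.1 + 1/(n+1)
    have : (0:ℝ) < 1/(n+1) := by positivity
    linarith
lemma aux1 (t x vt vx : ℝ) (h1 : |x| < t) (h2 : vt < |vx|)
    (hD : 0 < t*vx - x*vt) : vt < vx := by
  obtain ⟨hx1, hx2⟩ := abs_lt.mp h1
  have ht : 0 < t := lt_of_le_of_lt (abs_nonneg x) h1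
  rcases lt_abs.mp h2 with h | h
  · exact h
  · by_contra hc
    push_neg at hc  -- vx ≤ vt
    rcases le_or_gt 0 vt with hvt | hvt
    · nlinarith [mul_nonneg (by linarith : (0:ℝ) ≤ x + t) hvt,
        mul_pos ht (by linarith : (0:ℝ) < -vx - vt)]
    · nlinarith [mul_pos (by linarith : (0:ℝ) < t - x) (by linarith : (0:ℝ) < -vt),
        mul_nonneg ht.le (by linarith : (0:ℝ) ≤ vt - vx)]

lemma aux2 (t x vt vx : ℝ) (h1 : |x| < t) (h2 : vt < |vx|)
    (hD : t*vx - x*vt < 0) : vt < -vx := by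
  have := aux1 t (-x) vt (-vx) (by simpa using h1) (by simpa using h2) (by nlinarith)
  exact this

lemma aux3 (t x vt vx : ℝ) (h1 : |x| < t) (h2 : vt < |vx|)
    (hD : t*vx - x*vt = 0) : |vx| < -vt := by
  have ht : 0 < t := lt_of_le_of_lt (abs_nonneg x) h1
  have habs : t * |vx| = |x| * |vt| := by
    rw [← abs_of_pos ht, ← abs_mul, ← abs_mul]
    congr 1
    linarith
  rcases eq_or_lt_of_le (abs_nonneg vt) with h0 | h0
  · exfalso
    have hvt : vt = 0 := abs_eq_zero.mp h0.symm
    have : |vx| = 0 := by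
      have := habs
      rw [← h0] at this
      simp at this
      rcases this with h | h
      · linarith
      · simp [h]
    rw [this, hvt] at h2; linarith
  · have hlt : t * |vx| < t * |vt| := by
      calc t * |vx| = |x| * |vt| := habs
        _ < t * |vt| := by exact mul_lt_mul_of_pos_right h1 h0
    have hvxvt : |vx| < |vt| := lt_of_mul_lt_mul_left hlt ht.le
    have hvtneg : vt < 0 := by
      rcases abs_cases vt with ⟨he, _⟩ | ⟨_, hn⟩
      · exfalso; rw [he] at hvxvt; linarith
      · exact hn
    rwa [abs_of_neg hvtneg] at hvxvt

noncomputable def DD (g : GI) : ℝ := g.val.1.1 * g.val.2.2 - g.val.1.2 * g.val.2.1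

lemma exitXi_eq (g : GI) :
    exitXi g = DD g / (Real.sign (DD g) * g.val.2.2 - g.val.2.1) := rfl

lemma gi_h1 (g : GI) : |g.val.1.2| < g.val.1.1 := g.prop.1

lemma gi_h2 (g : GI) : g.val.2.1 < |g.val.2.2| := by
  have h := g.prop.2
  rw [mem_closure_quad_iff] at h
  exact lt_of_not_ge h

lemma cont_val : Continuous (fun g : GI => g.val) := continuous_subtype_val

lemma cont_DD : Continuous DD :=
  ((cont_val.fst.fst).mul (cont_val.snd.snd)).sub ((cont_val.fst.snd).mul (cont_val.snd.fst))

lemma sign_mul_ge (a b : ℝ) : -|b| ≤ Real.sign a * b := by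
  rcases Real.sign_apply_eq a with h | h | h <;> rw [h]
  · rw [neg_one_mul]
    have : b ≤ |b| := le_abs_self b
    linarith
  · simp
  · have : -|b| ≤ b := neg_abs_le b
    linarith

lemma cont_exitXi : Continuous exitXi := by
  rw [continuous_iff_continuousAt]
  intro g
  rcases lt_trichotomy (DD g) 0 with hD | hD | hD
  · have hden : 0 < -(g.val.2.2) - g.val.2.1 := by
      have := aux2 _ _ _ _ (gi_h1 g) (gi_h2 g) hD
      linarith
    have hca : ContinuousAt (fun h : GI => DD h / (-(h.val.2.2) - h.val.2.1)) g :=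
      ContinuousAt.div cont_DD.continuousAt
        ((cont_val.snd.snd.neg).sub cont_val.snd.fst).continuousAt (ne_of_gt hden)
    apply hca.congr
    have hmem : {h : GI | DD h < 0} ∈ nhds g := (isOpen_lt cont_DD continuous_const).mem_nhds hD
    filter_upwards [hmem] with h hh
    rw [exitXi_eq, Real.sign_of_neg hh, neg_one_mul]
  · have hg3 := aux3 _ _ _ _ (gi_h1 g) (gi_h2 g) hD
    have hval : exitXi g = 0 := by rw [exitXi_eq, hD, zero_div]
    rw [ContinuousAt, hval]
    have hTmem : {h : GI | |h.val.2.2| < -(h.val.2.1)} ∈ nhds g :=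
      (isOpen_lt (cont_val.snd.snd.abs) (cont_val.snd.fst.neg)).mem_nhds hg3
    apply squeeze_zero_norm' (a := fun h : GI => |DD h| / (-(h.val.2.1) - |h.val.2.2|))
    · filter_upwards [hTmem] with h hh
      have hden0 : 0 < -(h.val.2.1) - |h.val.2.2| := by
        have hh' : |h.val.2.2| < -(h.val.2.1) := hh; linarith
      have hden1 : -(h.val.2.1) - |h.val.2.2| ≤ Real.sign (DD h) * h.val.2.2 - h.val.2.1 := by
        have := sign_mul_ge (DD h) h.val.2.2; linarith
      rw [exitXi_eq, Real.norm_eq_abs, abs_div, abs_of_pos (lt_of_lt_of_le hden0 hden1)]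
      gcongr
    · have hb : ContinuousAt (fun h : GI => |DD h| / (-(h.val.2.1) - |h.val.2.2|)) g :=
        ContinuousAt.div (cont_DD.abs.continuousAt)
          ((cont_val.snd.fst.neg).sub cont_val.snd.snd.abs).continuousAt
          (ne_of_gt (by linarith))
      have ht := hb.tendsto
      simpa [hD] using ht
  · have hden : 0 < g.val.2.2 - g.val.2.1 := by
      have := aux1 _ _ _ _ (gi_h1 g) (gi_h2 g) hD
      linarith
    have hca : ContinuousAt (fun h : GI => DD h / (h.val.2.2 - h.val.2.1)) g :=
      ContinuousAt.div cont_DD.continuousAt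
        ((cont_val.snd.snd).sub cont_val.snd.fst).continuousAt (ne_of_gt hden)
    apply hca.congr
    have hmem : {h : GI | 0 < DD h} ∈ nhds g := (isOpen_lt continuous_const cont_DD).mem_nhds hD
    filter_upwards [hmem] with h hh
    rw [exitXi_eq, Real.sign_of_pos hh, one_mul]

lemma section_mem (t x u c : ℝ) (h1 : |x| < t) (hc : 0 < c) :
    (((t,x),(c*(|u| - t), c*(u - x))) : (ℝ × ℝ) × (ℝ × ℝ)).1 ∈ Quad ∧
      (((t,x),(c*(|u| - t), c*(u - x))) : (ℝ × ℝ) × (ℝ × ℝ)).2 ∉ closure Quad := by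
  refine ⟨h1, ?_⟩
  rw [mem_closure_quad_iff]
  push_neg
  show c*(|u| - t) < |c*(u - x)|
  rw [abs_mul, abs_of_pos hc]
  have key : |u| - t < |u - x| := by
    have h := abs_sub_abs_le_abs_sub u x
    have := abs_lt.mp h1
    linarith
  nlinarith

lemma section_eval (t x u c : ℝ) (h1 : |x| < t) (hc : 0 < c)
    (hmem : (((t,x),(c*(|u| - t), c*(u - x))) : (ℝ × ℝ) × (ℝ × ℝ)).1 ∈ Quad ∧
      (((t,x),(c*(|u| - t), c*(u - x))) : (ℝ × ℝ) × (ℝ × ℝ)).2 ∉ closure Quad) :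
    exitXi ⟨((t,x),(c*(|u| - t), c*(u - x))), hmem⟩ = u := by
  have ht : 0 < t := lt_of_le_of_lt (abs_nonneg x) h1
  obtain ⟨hx1, hx2⟩ := abs_lt.mp h1
  show (t*(c*(u - x)) - x*(c*(|u| - t))) /
    (Real.sign (t*(c*(u - x)) - x*(c*(|u| - t))) * (c*(u - x)) - c*(|u| - t)) = u
  rcases lt_trichotomy u 0 with hu | hu | hu
  · rw [abs_of_neg hu]
    have hDval : t*(c*(u - x)) - x*(c*(-u - t)) = u*(c*(t+x)) := by ring
    rw [hDval]
    have hcx : 0 < c*(t+x) := by nlinarith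
    have hDneg : u*(c*(t+x)) < 0 := mul_neg_of_neg_of_pos hu hcx
    rw [Real.sign_of_neg hDneg]
    have hdval : (-1)*(c*(u - x)) - c*(-u - t) = c*(t+x) := by ring
    rw [hdval, mul_div_assoc, div_self (ne_of_gt hcx), mul_one]
  · subst hu
    rw [abs_zero]
    have h0 : t*(c*(0 - x)) - x*(c*(0 - t)) = 0 := by ring
    rw [h0, zero_div]
  · rw [abs_of_pos hu]
    have hDval : t*(c*(u - x)) - x*(c*(u - t)) = u*(c*(t-x)) := by ring
    rw [hDval]
    have hcx : 0 < c*(t-x) := by nlinarith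
    have hDpos : 0 < u*(c*(t-x)) := mul_pos hu hcx
    rw [Real.sign_of_pos hDpos]
    have hdval : 1*(c*(u - x)) - c*(u - t) = c*(t-x) := by ring
    rw [hdval, mul_div_assoc, div_self (ne_of_gt hcx), mul_one]

lemma exists_scale (g : GI) : ∃ s : ℝ, 0 < s ∧
    |exitXi g| - g.val.1.1 = s * g.val.2.1 ∧ exitXi g - g.val.1.2 = s * g.val.2.2 := by
  obtain ⟨⟨⟨t, x⟩, ⟨vt, vx⟩⟩, hmem⟩ := g
  set g : GI := ⟨((t, x), (vt, vx)), hmem⟩ with hg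
  have h1 : |x| < t := hmem.1
  have h2 : vt < |vx| := by
    have h := hmem.2; rw [mem_closure_quad_iff] at h; exact lt_of_not_ge h
  have ht : 0 < t := lt_of_le_of_lt (abs_nonneg x) h1
  obtain ⟨hx1, hx2⟩ := abs_lt.mp h1
  have hDD : DD g = t*vx - x*vt := rfl
  rcases lt_trichotomy (t*vx - x*vt) 0 with hD | hD | hD
  · have hvv : vt < -vx := aux2 t x vt vx h1 h2 hD
    have hden : 0 < -vx - vt := by linarith
    have hxi : exitXi g = (t*vx - x*vt)/(-vx - vt) := by
      rw [exitXi_eq, hDD, Real.sign_of_neg hD, neg_one_mul]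
    have hxineg : exitXi g < 0 := by
      rw [hxi]; exact div_neg_of_neg_of_pos hD hden
    refine ⟨(t + x)/(-vx - vt), div_pos (by linarith) hden, ?_, ?_⟩
    · rw [abs_of_neg hxineg, hxi]
      field_simp
      ring
    · rw [hxi]
      field_simp
      ring
  · have h3 : |vx| < -vt := aux3 t x vt vx h1 h2 hD
    have hvt : vt < 0 := by have := abs_nonneg vx; linarith
    have hxi : exitXi g = 0 := by rw [exitXi_eq, hDD, hD, zero_div]
    have hvt' : vt ≠ 0 := ne_of_lt hvt
    refine ⟨t/(-vt), div_pos ht (by linarith), ?_, ?_⟩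
    · rw [hxi, abs_zero]
      show 0 - t = t / -vt * vt
      rw [div_neg, neg_mul, div_mul_eq_mul_div, mul_div_assoc, div_self hvt']
      ring
    · rw [hxi]
      show 0 - x = t / -vt * vx
      have key : t * vx = x * vt := by linarith
      rw [div_neg, neg_mul, div_mul_eq_mul_div, key, mul_div_assoc, div_self hvt']
      ring
  · have hvv : vt < vx := aux1 t x vt vx h1 h2 hD
    have hden : 0 < vx - vt := by linarith
    have hxi : exitXi g = (t*vx - x*vt)/(vx - vt) := by
      rw [exitXi_eq, hDD, Real.sign_of_pos hD, one_mul]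
    have hxipos : 0 < exitXi g := by
      rw [hxi]; exact div_pos hD hden
    refine ⟨(t - x)/(vx - vt), div_pos (by linarith) hden, ?_, ?_⟩
    · rw [abs_of_pos hxipos, hxi]
      field_simp
      ring
    · rw [hxi]
      field_simp
      ring

lemma open_exitXi : IsOpenMap exitXi := by
  intro U hU
  rw [isOpen_iff_forall_mem_open]
  rintro ξ ⟨g, hgU, rfl⟩
  obtain ⟨s, hs, hw1, hw2⟩ := exists_scale g
  have hs' : s ≠ 0 := ne_of_gt hs
  set σ : ℝ → GI := fun u =>
    ⟨((g.val.1.1, g.val.1.2), (s⁻¹*(|u| - g.val.1.1), s⁻¹*(u - g.val.1.2))),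
      section_mem _ _ u _ (gi_h1 g) (inv_pos.mpr hs)⟩ with hσ
  have hσc : Continuous σ := by
    apply Continuous.subtype_mk
    exact continuous_const.prodMk
      ((continuous_const.mul (continuous_abs.sub continuous_const)).prodMk
        (continuous_const.mul (continuous_id.sub continuous_const)))
  have hσeval : ∀ u, exitXi (σ u) = u := fun u =>
    section_eval _ _ u _ (gi_h1 g) (inv_pos.mpr hs) _
  have hσg : σ (exitXi g) = g := by
    apply Subtype.ext
    have e1 : s⁻¹*(|exitXi g| - g.val.1.1) = g.val.2.1 := by
      rw [hw1]; field_simp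
    have e2 : s⁻¹*(exitXi g - g.val.1.2) = g.val.2.2 := by
      rw [hw2]; field_simp
    show ((g.val.1.1, g.val.1.2), (s⁻¹*(|exitXi g| - g.val.1.1), s⁻¹*(exitXi g - g.val.1.2)))
      = g.val
    rw [e1, e2]
  refine ⟨σ ⁻¹' U, ?_, hU.preimage hσc, ?_⟩
  · intro u hu
    exact ⟨σ u, hu, hσeval u⟩
  · rw [Set.mem_preimage, hσg]
    exact hgU

noncomputable def sigma0 (u : ℝ) : GI :=
  ⟨((1,0),(1*(|u| - 1), 1*(u - 0))), section_mem 1 0 u 1 (by norm_num) one_pos⟩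

lemma sigma0_eval (u : ℝ) : exitXi (sigma0 u) = u :=
  section_eval 1 0 u 1 (by norm_num) one_pos _

lemma surj_exitXi : Function.Surjective exitXi := fun u => ⟨sigma0 u, sigma0_eval u⟩

noncomputable def quotEquiv : Quot (fun a b : GI => exitXi a = exitXi b) ≃ ℝ where
  toFun := Quot.lift exitXi (fun _ _ h => h)
  invFun := fun u => Quot.mk _ (sigma0 u)
  left_inv := by
    apply Quot.ind
    intro a
    exact Quot.sound (by rw [sigma0_eval] : exitXi (sigma0 (exitXi a)) = exitXi a)
  right_inv := fun u => sigma0_eval u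

theorem gboundary_of_quadrant_is_R :
    Continuous exitXi ∧ IsOpenMap exitXi ∧ Function.Surjective exitXi ∧
    Nonempty (Quot (fun a b : GI => exitXi a = exitXi b) ≃ₜ ℝ) := by
  refine ⟨cont_exitXi, open_exitXi, surj_exitXi, ?_⟩
  refine ⟨quotEquiv.toHomeomorphOfContinuousOpen ?_ ?_⟩
  · exact continuous_quot_lift _ cont_exitXi
  · show IsOpenMap (Quot.lift exitXi (fun _ _ h => h))
    intro U hU
    have hpre : IsOpen (Quot.mk (fun a b : GI => exitXi a = exitXi b) ⁻¹' U) :=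
      hU.preimage continuous_quot_mk
    have himg : Quot.lift exitXi (fun _ _ h => h) '' U
        = exitXi '' (Quot.mk (fun a b : GI => exitXi a = exitXi b) ⁻¹' U) := by
      ext u
      constructor
      · rintro ⟨q, hq, rfl⟩
        obtain ⟨a, rfl⟩ := Quot.exists_rep q
        exact ⟨a, hq, rfl⟩
      · rintro ⟨a, ha, rfl⟩
        exact ⟨Quot.mk _ a, ha, rfl⟩
    rw [himg]
    exact open_exitXi _ hpre
end
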